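/- Suppose z ∈ ℂ∖{0} is such that the nonnegative matrix series N1(|z|), G1(|z|) and R1(|z|) converge entrywise, and define H1(z) = A_{*,0}(z) + A_{*,1}(z)·N1(z)·A_{*,−1}(z). Then (I − H1(z)) · N1(z) = I. -/

import Mathlib

namespace QBDSeries

/-- The index set `H = {-1, 0, 1}`. -/
def Hs : Finset ℤ := {-1, 0, 1}

/-- Partial sum of the first `k` entries of a sequence `σ : Fin n → ℤ`. -/
def psum {n : ℕ} (σ : Fin n → ℤ) (k : ℕ) : ℤ :=
  ∑ i ∈ Finset.univ.filter (fun i : Fin n => (i : ℕ) < k), σ i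

/-- Condition defining the index set `𝓘_n`. -/
def condQ (n : ℕ) (σ : Fin n → ℤ) : Prop :=
  (∀ k : ℕ, 1 ≤ k → k ≤ n - 1 → 0 ≤ psum σ k) ∧ psum σ n = 0

/-- Condition defining the index set `𝓘_{D,n}`. -/
def condD (n : ℕ) (σ : Fin n → ℤ) : Prop :=
  (∀ k : ℕ, 1 ≤ k → k ≤ n - 1 → 0 ≤ psum σ k) ∧ psum σ n = -1

/-- Condition defining the index set `𝓘_{U,n}`. -/
def condU (n : ℕ) (σ : Fin n → ℤ) : Prop :=
  (∀ k : ℕ, 1 ≤ k → k ≤ n - 1 → 1 ≤ psum σ k) ∧ psum σ n = 1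

/-- `A_{*,i}(z) = Σ_{j∈H} A_{j,i} z^j` over `ℂ`. -/
noncomputable def AstarC (s0 : ℕ) (A : ℤ → ℤ → Matrix (Fin s0) (Fin s0) ℝ) (z : ℂ) (i : ℤ) :
    Matrix (Fin s0) (Fin s0) ℂ :=
  ∑ j ∈ Hs, (z ^ j) • (A j i).map Complex.ofReal

/-- `A_{*,i}(z) = Σ_{j∈H} A_{j,i} z^j` over `ℝ`. -/
noncomputable def AstarR (s0 : ℕ) (A : ℤ → ℤ → Matrix (Fin s0) (Fin s0) ℝ) (z : ℝ) (i : ℤ) :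
    Matrix (Fin s0) (Fin s0) ℝ :=
  ∑ j ∈ Hs, (z ^ j) • A j i

open Classical in
/-- `Σ_{σ ∈ cond} A_{*,σ1}(z)⋯A_{*,σn}(z)` over `ℂ`. -/
noncomputable def pathSumC (s0 : ℕ) (A : ℤ → ℤ → Matrix (Fin s0) (Fin s0) ℝ) (z : ℂ) (n : ℕ)
    (cond : (Fin n → ℤ) → Prop) : Matrix (Fin s0) (Fin s0) ℂ :=
  ∑ σ : Fin n → {x : ℤ // x ∈ Hs},
    if cond (fun k => (σ k : ℤ)) then (List.ofFn fun k : Fin n => AstarC s0 A z (σ k : ℤ)).prod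
    else 0

open Classical in
/-- `Σ_{σ ∈ cond} A_{*,σ1}(z)⋯A_{*,σn}(z)` over `ℝ`. -/
noncomputable def pathSumR (s0 : ℕ) (A : ℤ → ℤ → Matrix (Fin s0) (Fin s0) ℝ) (z : ℝ) (n : ℕ)
    (cond : (Fin n → ℤ) → Prop) : Matrix (Fin s0) (Fin s0) ℝ :=
  ∑ σ : Fin n → {x : ℤ // x ∈ Hs},
    if cond (fun k => (σ k : ℤ)) then (List.ofFn fun k : Fin n => AstarR s0 A z (σ k : ℤ)).prod
    else 0

/-- `Q^{(n)}(z)` (complex); `Q^{(0)}(z) = I`. -/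
noncomputable def QmatC (s0 : ℕ) (A : ℤ → ℤ → Matrix (Fin s0) (Fin s0) ℝ) (z : ℂ) (n : ℕ) :
    Matrix (Fin s0) (Fin s0) ℂ := pathSumC s0 A z n (condQ n)

/-- `D^{(n)}(z)` (complex); it vanishes for `n = 0`. -/
noncomputable def DmatC (s0 : ℕ) (A : ℤ → ℤ → Matrix (Fin s0) (Fin s0) ℝ) (z : ℂ) (n : ℕ) :
    Matrix (Fin s0) (Fin s0) ℂ := pathSumC s0 A z n (condD n)

/-- `U^{(n)}(z)` (complex); it vanishes for `n = 0`. -/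
noncomputable def UmatC (s0 : ℕ) (A : ℤ → ℤ → Matrix (Fin s0) (Fin s0) ℝ) (z : ℂ) (n : ℕ) :
    Matrix (Fin s0) (Fin s0) ℂ := pathSumC s0 A z n (condU n)

/-- `Q^{(n)}(z)` (real). -/
noncomputable def QmatR (s0 : ℕ) (A : ℤ → ℤ → Matrix (Fin s0) (Fin s0) ℝ) (z : ℝ) (n : ℕ) :
    Matrix (Fin s0) (Fin s0) ℝ := pathSumR s0 A z n (condQ n)

/-- `D^{(n)}(z)` (real). -/
noncomputable def DmatR (s0 : ℕ) (A : ℤ → ℤ → Matrix (Fin s0) (Fin s0) ℝ) (z : ℝ) (n : ℕ) :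
    Matrix (Fin s0) (Fin s0) ℝ := pathSumR s0 A z n (condD n)

/-- `U^{(n)}(z)` (real). -/
noncomputable def UmatR (s0 : ℕ) (A : ℤ → ℤ → Matrix (Fin s0) (Fin s0) ℝ) (z : ℝ) (n : ℕ) :
    Matrix (Fin s0) (Fin s0) ℝ := pathSumR s0 A z n (condU n)

/-- `N1(z) = Σ_{n≥0} Q^{(n)}(z)`, entrywise (complex). -/
noncomputable def N1C (s0 : ℕ) (A : ℤ → ℤ → Matrix (Fin s0) (Fin s0) ℝ) (z : ℂ) :
    Matrix (Fin s0) (Fin s0) ℂ := Matrix.of fun i j => ∑' n : ℕ, QmatC s0 A z n i j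

/-- `G1(z) = Σ_{n≥1} D^{(n)}(z)`, entrywise (complex). -/
noncomputable def G1C (s0 : ℕ) (A : ℤ → ℤ → Matrix (Fin s0) (Fin s0) ℝ) (z : ℂ) :
    Matrix (Fin s0) (Fin s0) ℂ := Matrix.of fun i j => ∑' n : ℕ, DmatC s0 A z n i j

/-- `R1(z) = Σ_{n≥1} U^{(n)}(z)`, entrywise (complex). -/
noncomputable def R1C (s0 : ℕ) (A : ℤ → ℤ → Matrix (Fin s0) (Fin s0) ℝ) (z : ℂ) :
    Matrix (Fin s0) (Fin s0) ℂ := Matrix.of fun i j => ∑' n : ℕ, UmatC s0 A z n i j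

/-- `N1(z)` (real). -/
noncomputable def N1R (s0 : ℕ) (A : ℤ → ℤ → Matrix (Fin s0) (Fin s0) ℝ) (z : ℝ) :
    Matrix (Fin s0) (Fin s0) ℝ := Matrix.of fun i j => ∑' n : ℕ, QmatR s0 A z n i j

/-- `G1(z)` (real). -/
noncomputable def G1R (s0 : ℕ) (A : ℤ → ℤ → Matrix (Fin s0) (Fin s0) ℝ) (z : ℝ) :
    Matrix (Fin s0) (Fin s0) ℝ := Matrix.of fun i j => ∑' n : ℕ, DmatR s0 A z n i j

/-- `R1(z)` (real). -/
noncomputable def R1R (s0 : ℕ) (A : ℤ → ℤ → Matrix (Fin s0) (Fin s0) ℝ) (z : ℝ) :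
    Matrix (Fin s0) (Fin s0) ℝ := Matrix.of fun i j => ∑' n : ℕ, UmatR s0 A z n i j

/-- `C(z,w) = Σ_{i,j∈H} A_{i,j} z^i w^j` over `ℂ`. -/
noncomputable def CmatC (s0 : ℕ) (A : ℤ → ℤ → Matrix (Fin s0) (Fin s0) ℝ) (z w : ℂ) :
    Matrix (Fin s0) (Fin s0) ℂ :=
  ∑ i ∈ Hs, ∑ j ∈ Hs, (z ^ i * w ^ j) • (A i j).map Complex.ofReal

/-- `H1(z) = A_{*,0}(z) + A_{*,1}(z) N1(z) A_{*,-1}(z)` (complex). -/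
noncomputable def H1C (s0 : ℕ) (A : ℤ → ℤ → Matrix (Fin s0) (Fin s0) ℝ) (z : ℂ) :
    Matrix (Fin s0) (Fin s0) ℂ :=
  AstarC s0 A z 0 + AstarC s0 A z 1 * N1C s0 A z * AstarC s0 A z (-1)

/-- A matrix with row sums one and nonnegative entries. -/
def IsStochastic {n : ℕ} (M : Matrix (Fin n) (Fin n) ℝ) : Prop :=
  (∀ i j, 0 ≤ M i j) ∧ ∀ i, ∑ j, M i j = 1

end QBDSeries

namespace QBDSeries

abbrev HB : Type := {x : ℤ // x ∈ Hs}

lemma neg_one_mem_Hs : (-1 : ℤ) ∈ Hs := by decide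
lemma zero_mem_Hs : (0 : ℤ) ∈ Hs := by decide
lemma one_mem_Hs : (1 : ℤ) ∈ Hs := by decide

lemma mem_Hs {x : ℤ} : x ∈ Hs ↔ x = -1 ∨ x = 0 ∨ x = 1 := by
  simp [Hs]

lemma psum_eq_sum_take {n : ℕ} (σ : Fin n → ℤ) (k : ℕ) :
    psum σ k = ((List.ofFn σ).take k).sum := (List.sum_take_ofFn σ k).symm

lemma psum_zero {n : ℕ} (σ : Fin n → ℤ) : psum σ 0 = 0 := by
  simp [psum_eq_sum_take]

lemma psum_all {n : ℕ} (σ : Fin n → ℤ) : psum σ n = (List.ofFn σ).sum := by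
  rw [psum_eq_sum_take, List.take_of_length_le (le_of_eq List.length_ofFn)]

lemma ofFn_cons {n : ℕ} {α : Type*} (x : α) (τ : Fin n → α) :
    List.ofFn (Fin.cons x τ : Fin (n+1) → α) = x :: List.ofFn τ := by
  rw [List.ofFn_succ]; simp

lemma psum_cons {n : ℕ} (x : ℤ) (τ : Fin n → ℤ) (k : ℕ) :
    psum (Fin.cons x τ) (k + 1) = x + psum τ k := by
  rw [psum_eq_sum_take, ofFn_cons, List.take_succ_cons, List.sum_cons, psum_eq_sum_take]

lemma psum_succ {n : ℕ} (σ : Fin n → ℤ) (k : ℕ) (h : k < n) :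
    psum σ (k + 1) = psum σ k + σ ⟨k, h⟩ := by
  unfold psum
  have hfil : Finset.univ.filter (fun i : Fin n => (i : ℕ) < k + 1)
      = insert ⟨k, h⟩ (Finset.univ.filter (fun i : Fin n => (i : ℕ) < k)) := by
    ext i
    simp only [Finset.mem_filter, Finset.mem_univ, true_and, Finset.mem_insert, Fin.ext_iff]
    omega
  rw [hfil, Finset.sum_insert (by simp)]
  ring

/-- The index condition for `P`-paths: from level `0` down to level `-1`,
staying `≥ -1` (i.e. shifted copy of paths from level 1 to 0 staying `≥ 0`). -/
def condP (n : ℕ) (σ : Fin n → ℤ) : Prop :=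
  (∀ k : ℕ, 1 ≤ k → k ≤ n - 1 → -1 ≤ psum σ k) ∧ psum σ n = -1

noncomputable def PmatC (s0 : ℕ) (A : ℤ → ℤ → Matrix (Fin s0) (Fin s0) ℝ) (z : ℂ) (n : ℕ) :
    Matrix (Fin s0) (Fin s0) ℂ := pathSumC s0 A z n (condP n)

lemma sum_HB {M : Type*} [AddCommMonoid M] (g : HB → M) :
    ∑ x : HB, g x = g ⟨-1, neg_one_mem_Hs⟩ + g ⟨0, zero_mem_Hs⟩ + g ⟨1, one_mem_Hs⟩ := by
  have : (Finset.univ : Finset HB)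
      = {⟨-1, neg_one_mem_Hs⟩, ⟨0, zero_mem_Hs⟩, ⟨1, one_mem_Hs⟩} := by
    decide
  rw [this, Finset.sum_insert (by decide), Finset.sum_insert (by decide),
    Finset.sum_singleton, add_assoc]

variable {s0 : ℕ} {A : ℤ → ℤ → Matrix (Fin s0) (Fin s0) ℝ} {z : ℂ}

lemma pathSumC_congr {n : ℕ} {c1 c2 : (Fin n → ℤ) → Prop} (h : ∀ σ, c1 σ ↔ c2 σ) :
    pathSumC s0 A z n c1 = pathSumC s0 A z n c2 := by
  classical
  unfold pathSumC
  exact Finset.sum_congr rfl fun σ _ => if_congr (h _) rfl rfl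

lemma pathSumC_succ_cons (n : ℕ) (cond : (Fin (n+1) → ℤ) → Prop) :
    pathSumC s0 A z (n+1) cond
      = ∑ x : HB, AstarC s0 A z (x : ℤ) *
          pathSumC s0 A z n (fun τ => cond (Fin.cons (x : ℤ) τ)) := by
  classical
  unfold pathSumC
  rw [← Equiv.sum_comp (Fin.consEquiv fun _ : Fin (n+1) => HB), Fintype.sum_prod_type]
  refine Finset.sum_congr rfl fun x _ => ?_
  rw [Finset.mul_sum]
  refine Finset.sum_congr rfl fun τ _ => ?_
  have e1 : (Fin.consEquiv fun _ : Fin (n+1) => HB) (x, τ) = Fin.cons x τ := rfl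
  rw [e1]
  have e2 : (fun k => ((Fin.cons x τ : Fin (n+1) → HB) k : ℤ))
      = Fin.cons (x : ℤ) fun k => (τ k : ℤ) :=
    Fin.comp_cons (fun t : HB => (t : ℤ)) x τ
  have e3 : (List.ofFn fun k : Fin (n+1) => AstarC s0 A z ((Fin.cons x τ : Fin (n+1) → HB) k : ℤ))
      = AstarC s0 A z (x : ℤ) :: List.ofFn fun k => AstarC s0 A z (τ k : ℤ) := by
    rw [List.ofFn_succ]; simp
  rw [e2, e3, List.prod_cons, mul_ite, mul_zero]

lemma condQ_cons_zero (n : ℕ) (τ : Fin n → ℤ) :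
    condQ (n+1) (Fin.cons 0 τ) ↔ condQ n τ := by
  unfold condQ
  constructor
  · rintro ⟨h1, h2⟩
    refine ⟨fun k hk1 hk2 => ?_, ?_⟩
    · have := h1 (k+1) (by omega) (by omega)
      rwa [psum_cons, zero_add] at this
    · have := h2
      rwa [psum_cons, zero_add] at this
  · rintro ⟨h1, h2⟩
    refine ⟨fun k hk1 hk2 => ?_, ?_⟩
    · obtain ⟨k', rfl⟩ : ∃ k', k = k' + 1 := ⟨k - 1, by omega⟩
      rw [psum_cons, zero_add]
      rcases Nat.eq_zero_or_pos k' with h | h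
      · subst h; rw [psum_zero]
      · exact h1 k' h (by omega)
    · rw [psum_cons, zero_add]; exact h2

lemma condQ_cons_one (n : ℕ) (τ : Fin n → ℤ) :
    condQ (n+1) (Fin.cons 1 τ) ↔ condP n τ := by
  unfold condQ condP
  constructor
  · rintro ⟨h1, h2⟩
    refine ⟨fun k hk1 hk2 => ?_, ?_⟩
    · have := h1 (k+1) (by omega) (by omega)
      rw [psum_cons] at this; omega
    · have := h2
      rw [psum_cons] at this; omega
  · rintro ⟨h1, h2⟩
    refine ⟨fun k hk1 hk2 => ?_, ?_⟩
    · obtain ⟨k', rfl⟩ : ∃ k', k = k' + 1 := ⟨k - 1, by omega⟩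
      rw [psum_cons]
      rcases Nat.eq_zero_or_pos k' with h | h
      · subst h; rw [psum_zero]; omega
      · have := h1 k' h (by omega); omega
    · rw [psum_cons]; omega

lemma condQ_cons_neg (n : ℕ) (τ : Fin n → ℤ) :
    ¬ condQ (n+1) (Fin.cons (-1) τ) := by
  rintro ⟨h1, h2⟩
  have hp : psum (Fin.cons (-1 : ℤ) τ) (0 + 1) = -1 + psum τ 0 := psum_cons _ _ _
  rw [psum_zero] at hp
  simp only [zero_add, add_zero] at hp
  rcases Nat.eq_zero_or_pos n with h | h
  · subst h
    simp only [zero_add] at h2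
    omega
  · have := h1 1 le_rfl (by omega)
    omega

lemma QmatC_zero : QmatC s0 A z 0 = 1 := by
  unfold QmatC pathSumC
  rw [Fintype.sum_unique, if_pos]
  · simp
  · exact ⟨fun k hk1 hk2 => by omega, psum_zero _⟩

lemma PmatC_zero : PmatC s0 A z 0 = 0 := by
  unfold PmatC pathSumC
  rw [Fintype.sum_unique, if_neg]
  rintro ⟨-, h2⟩
  rw [psum_zero] at h2
  omega

lemma QmatC_succ (n : ℕ) :
    QmatC s0 A z (n+1) = AstarC s0 A z 0 * QmatC s0 A z n + AstarC s0 A z 1 * PmatC s0 A z n := by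
  unfold QmatC PmatC
  rw [pathSumC_succ_cons, sum_HB]
  have hm1 : pathSumC s0 A z n (fun τ => condQ (n+1) (Fin.cons ((⟨-1, neg_one_mem_Hs⟩ : HB) : ℤ) τ)) = 0 := by
    unfold pathSumC
    exact Finset.sum_eq_zero fun τ _ => if_neg (condQ_cons_neg n _)
  have h0 : pathSumC s0 A z n (fun τ => condQ (n+1) (Fin.cons ((⟨0, zero_mem_Hs⟩ : HB) : ℤ) τ))
      = pathSumC s0 A z n (condQ n) := pathSumC_congr fun τ => condQ_cons_zero n τ
  have h1 : pathSumC s0 A z n (fun τ => condQ (n+1) (Fin.cons ((⟨1, one_mem_Hs⟩ : HB) : ℤ) τ))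
      = pathSumC s0 A z n (condP n) := pathSumC_congr fun τ => condQ_cons_one n τ
  rw [hm1, h0, h1, mul_zero, zero_add]

end QBDSeries

namespace QBDSeries

section Concat

variable {α : Type*} {γ : Type*} {a b : ℕ}

/-- Concatenation of a tuple, one element, and another tuple. -/
def concat (τ1 : Fin a → α) (x : α) (τ2 : Fin b → α) : Fin (a+b+1) → α :=
  fun k => Fin.append τ1 (Fin.cons x τ2) (Fin.cast (by omega) k)

lemma concat_lt (τ1 : Fin a → α) (x : α) (τ2 : Fin b → α) (i : Fin (a+b+1))
    (h : (i : ℕ) < a) : concat τ1 x τ2 i = τ1 ⟨i, h⟩ := by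
  unfold concat
  have e : Fin.cast (by omega : a+b+1 = a+(b+1)) i = Fin.castAdd (b+1) ⟨(i:ℕ), h⟩ := by
    ext; simp
  rw [e, Fin.append_left]

lemma concat_eq (τ1 : Fin a → α) (x : α) (τ2 : Fin b → α) (i : Fin (a+b+1))
    (h : (i : ℕ) = a) : concat τ1 x τ2 i = x := by
  unfold concat
  have e : Fin.cast (by omega : a+b+1 = a+(b+1)) i = Fin.natAdd a (0 : Fin (b+1)) := by
    ext; simp [h]
  rw [e, Fin.append_right, Fin.cons_zero]

lemma concat_gt (τ1 : Fin a → α) (x : α) (τ2 : Fin b → α) (i : Fin (a+b+1))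
    (h : a < (i : ℕ)) : concat τ1 x τ2 i = τ2 ⟨(i:ℕ) - (a+1), by omega⟩ := by
  unfold concat
  have e : Fin.cast (by omega : a+b+1 = a+(b+1)) i
      = Fin.natAdd a (Fin.succ ⟨(i:ℕ) - (a+1), by omega⟩) := by
    ext; simp; omega
  rw [e, Fin.append_right, Fin.cons_succ]

lemma comp_concat (g : α → γ) (τ1 : Fin a → α) (x : α) (τ2 : Fin b → α) :
    (fun k => g (concat τ1 x τ2 k)) = concat (fun k => g (τ1 k)) (g x) (fun k => g (τ2 k)) := by
  funext i
  rcases Nat.lt_trichotomy (i : ℕ) a with h | h | h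
  · rw [concat_lt _ _ _ _ h, concat_lt _ _ _ _ h]
  · rw [concat_eq _ _ _ _ h, concat_eq _ _ _ _ h]
  · rw [concat_gt _ _ _ _ h, concat_gt _ _ _ _ h]

lemma ofFn_concat (τ1 : Fin a → α) (x : α) (τ2 : Fin b → α) :
    List.ofFn (concat τ1 x τ2) = List.ofFn τ1 ++ x :: List.ofFn τ2 := by
  have e : (fun i : Fin (a+(b+1)) => concat τ1 x τ2 (Fin.cast (by omega : a+(b+1) = a+b+1) i))
      = Fin.append τ1 (Fin.cons x τ2) := by
    funext i
    rfl
  rw [List.ofFn_congr (by omega : a+b+1 = a+(b+1)) (concat τ1 x τ2)]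
  rw [show (fun i : Fin (a+(b+1)) => concat τ1 x τ2 (Fin.cast (by omega) i))
      = Fin.append τ1 (Fin.cons x τ2) from e]
  rw [List.ofFn_fin_append, ofFn_cons]

end Concat

lemma psum_concat_le {a b : ℕ} (τ1 : Fin a → ℤ) (x : ℤ) (τ2 : Fin b → ℤ) {k : ℕ} (hk : k ≤ a) :
    psum (concat τ1 x τ2) k = psum τ1 k := by
  rw [psum_eq_sum_take, ofFn_concat, List.take_append]
  have h0 : k - (List.ofFn τ1).length = 0 := by simp; omega
  rw [h0, List.take_zero, List.append_nil, ← psum_eq_sum_take]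

lemma psum_concat_ge {a b : ℕ} (τ1 : Fin a → ℤ) (x : ℤ) (τ2 : Fin b → ℤ) {k : ℕ}
    (hk : a + 1 ≤ k) :
    psum (concat τ1 x τ2) k = psum τ1 a + x + psum τ2 (k - (a+1)) := by
  rw [psum_eq_sum_take, ofFn_concat, List.take_append, List.sum_append]
  have h1 : List.take k (List.ofFn τ1) = List.ofFn τ1 := List.take_of_length_le (by simp; omega)
  have h2 : k - (List.ofFn τ1).length = (k - (a+1)) + 1 := by simp; omega
  rw [h1, h2, List.take_succ_cons, List.sum_cons, psum_all, psum_eq_sum_take]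
  ring

lemma psum_castLE {n a : ℕ} (h : a ≤ n) (σ : Fin n → ℤ) {k : ℕ} (hk : k ≤ a) :
    psum (fun i : Fin a => σ (Fin.castLE h i)) k = psum σ k := by
  have e : List.ofFn (fun i : Fin a => σ (Fin.castLE h i)) = (List.ofFn σ).take a := by
    apply List.ext_getElem (by simp <;> omega)
    intro i h1 h2
    simp [List.getElem_take, List.getElem_ofFn]
  rw [psum_eq_sum_take, e, List.take_take, min_eq_left hk, ← psum_eq_sum_take]

lemma psum_drop {n c bb : ℕ} (h : c + bb = n) (σ : Fin n → ℤ) (k : ℕ) :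
    psum (fun i : Fin bb => σ ⟨c + (i : ℕ), by omega⟩) k = psum σ (c + k) - psum σ c := by
  have e : List.ofFn (fun i : Fin bb => σ ⟨c + (i : ℕ), by omega⟩) = (List.ofFn σ).drop c := by
    apply List.ext_getElem (by simp; omega)
    intro i h1 h2
    simp [List.getElem_drop, List.getElem_ofFn]
  rw [psum_eq_sum_take, e, psum_eq_sum_take σ (c + k), List.take_add, List.sum_append,
    ← psum_eq_sum_take]
  ring

lemma psum_split1 {n a : ℕ} (h : a ≤ n) (σ : Fin n → HB) {k : ℕ} (hk : k ≤ a) :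
    psum (fun i : Fin a => ((σ (Fin.castLE h i)) : ℤ)) k = psum (fun i => ((σ i) : ℤ)) k :=
  psum_castLE h (fun i => ((σ i) : ℤ)) hk

lemma psum_split2 {n c bb : ℕ} (h : c + bb = n) (σ : Fin n → HB) (k : ℕ) :
    psum (fun i : Fin bb => ((σ ⟨c + (i : ℕ), by omega⟩) : ℤ)) k
      = psum (fun i => ((σ i) : ℤ)) (c + k) - psum (fun i => ((σ i) : ℤ)) c :=
  psum_drop h (fun i => ((σ i) : ℤ)) k

lemma condQ_nonneg {n : ℕ} {τ : Fin n → ℤ} (h : condQ n τ) : ∀ k ≤ n, 0 ≤ psum τ k := by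
  intro k hk
  rcases Nat.eq_zero_or_pos k with h0 | h0
  · subst h0; rw [psum_zero]
  rcases eq_or_lt_of_le hk with he | hlt
  · subst he; exact le_of_eq h.2.symm
  · exact h.1 k h0 (by omega)

/-- `a` is the first index with partial sum `-1`. -/
def firstHit {n : ℕ} (σ : Fin n → ℤ) (a : ℕ) : Prop :=
  psum σ (a+1) = -1 ∧ ∀ k ≤ a, psum σ k ≠ -1

lemma firstHit_unique {n : ℕ} {σ : Fin n → ℤ} {a a' : ℕ}
    (h : firstHit σ a) (h' : firstHit σ a') : a = a' := by
  by_contra hne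
  rcases Nat.lt_or_ge a a' with hl | hg
  · exact h'.2 (a+1) (by omega) h.1
  · rcases Nat.lt_or_ge a' a with hl' | hg'
    · exact h.2 (a'+1) (by omega) h'.1
    · omega

lemma firstHit_exists {n : ℕ} {σ : Fin (n+1) → ℤ} (h : condP (n+1) σ) :
    ∃ a, a ≤ n ∧ firstHit σ a := by
  classical
  have hex : ∃ k, psum σ (k+1) = -1 := ⟨n, h.2⟩
  refine ⟨Nat.find hex, Nat.find_min' hex h.2, Nat.find_spec hex, ?_⟩
  intro k hk hcon
  rcases Nat.eq_zero_or_pos k with h0 | h0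
  · subst h0; rw [psum_zero] at hcon; omega
  obtain ⟨k', rfl⟩ : ∃ k', k = k' + 1 := ⟨k - 1, by omega⟩
  have := Nat.find_min' hex hcon
  omega

variable {s0 : ℕ} {A : ℤ → ℤ → Matrix (Fin s0) (Fin s0) ℝ} {z : ℂ}

open Classical in
lemma PmatC_piece (a b : ℕ) :
    (∑ σ : Fin (a+b+1) → HB,
      if condP (a+b+1) (fun k => (σ k : ℤ)) ∧ firstHit (fun k => (σ k : ℤ)) a
      then (List.ofFn fun k : Fin (a+b+1) => AstarC s0 A z (σ k : ℤ)).prod else 0)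
    = QmatC s0 A z a * AstarC s0 A z (-1) * QmatC s0 A z b := by
  classical
  unfold QmatC pathSumC
  rw [Finset.sum_mul, Finset.sum_mul]
  have rhs1 : ∀ τ1 : Fin a → HB,
      ((if condQ a (fun k => (τ1 k : ℤ)) then (List.ofFn fun k : Fin a => AstarC s0 A z (τ1 k : ℤ)).prod else 0)
        * AstarC s0 A z (-1))
        * (∑ τ2 : Fin b → HB, if condQ b (fun k => (τ2 k : ℤ)) then (List.ofFn fun k : Fin b => AstarC s0 A z (τ2 k : ℤ)).prod else 0)
      = ∑ τ2 : Fin b → HB,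
          if condQ a (fun k => (τ1 k : ℤ)) ∧ condQ b (fun k => (τ2 k : ℤ))
          then (List.ofFn fun k : Fin a => AstarC s0 A z (τ1 k : ℤ)).prod * AstarC s0 A z (-1)
            * (List.ofFn fun k : Fin b => AstarC s0 A z (τ2 k : ℤ)).prod
          else 0 := by
    intro τ1
    rw [Finset.mul_sum]
    refine Finset.sum_congr rfl fun τ2 _ => ?_
    by_cases h1 : condQ a (fun k => (τ1 k : ℤ)) <;>
      by_cases h2 : condQ b (fun k => (τ2 k : ℤ)) <;>
      simp [h1, h2]
  rw [Finset.sum_congr rfl fun τ1 _ => rhs1 τ1]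
  rw [← Fintype.sum_prod_type']
  rw [← Finset.sum_filter (fun σ : Fin (a+b+1) → HB =>
        condP (a+b+1) (fun k => (σ k : ℤ)) ∧ firstHit (fun k => (σ k : ℤ)) a)]
  rw [← Finset.sum_filter (fun p : (Fin a → HB) × (Fin b → HB) =>
        condQ a (fun k => (p.1 k : ℤ)) ∧ condQ b (fun k => (p.2 k : ℤ)))]
  symm
  refine Finset.sum_nbij'
    (i := fun p => concat p.1 ⟨-1, neg_one_mem_Hs⟩ p.2)
    (j := fun σ => (fun k : Fin a => σ (Fin.castLE (by omega) k),
                    fun k : Fin b => σ ⟨a + 1 + (k : ℕ), by omega⟩))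
    ?_ ?_ ?_ ?_ ?_
  · -- forward membership
    rintro ⟨τ1, τ2⟩ hp
    simp only [Finset.mem_filter, Finset.mem_univ, true_and] at hp ⊢
    obtain ⟨hq1, hq2⟩ := hp
    have hcoe : (fun k => ((concat τ1 (⟨-1, neg_one_mem_Hs⟩ : HB) τ2) k : ℤ))
        = concat (fun k => (τ1 k : ℤ)) (-1) (fun k => (τ2 k : ℤ)) :=
      comp_concat (fun t : HB => (t : ℤ)) τ1 _ τ2
    rw [hcoe]
    have h1a := hq1.2
    have h2b := hq2.2
    refine ⟨⟨fun k hk1 hk2 => ?_, ?_⟩, ?_, fun k hk => ?_⟩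
    · rcases le_or_gt k a with hle | hgt
      · rw [psum_concat_le _ _ _ hle]
        have := condQ_nonneg hq1 k hle
        omega
      · rw [psum_concat_ge _ _ _ (by omega)]
        have := condQ_nonneg hq2 (k - (a+1)) (by omega)
        omega
    · rw [psum_concat_ge _ _ _ (by omega), show a+b+1 - (a+1) = b from by omega]
      omega
    · rw [psum_concat_ge _ _ _ (by omega), show a+1 - (a+1) = 0 from by omega, psum_zero]
      omega
    · rw [psum_concat_le _ _ _ hk]
      have := condQ_nonneg hq1 k hk
      omega
  · -- backward membership
    intro σ hσ
    simp only [Finset.mem_filter, Finset.mem_univ, true_and] at hσ ⊢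
    obtain ⟨hP, hFH⟩ := hσ
    have key1 : ∀ k ≤ a, 0 ≤ psum (fun k => (σ k : ℤ)) k := by
      intro k hk
      rcases Nat.eq_zero_or_pos k with h0 | h0
      · subst h0; rw [psum_zero]
      have h1 := hP.1 k (by omega) (by omega)
      have h2 := hFH.2 k hk
      omega
    have hs := psum_succ (fun k => (σ k : ℤ)) a (by omega)
    have hmem := mem_Hs.mp (σ ⟨a, by omega⟩).2
    have h0 := key1 a le_rfl
    have hh := hFH.1
    have key2 : psum (fun k => (σ k : ℤ)) a = 0 ∧ ((σ ⟨a, by omega⟩ : HB) : ℤ) = -1 := by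
      rcases hmem with h | h | h <;> constructor <;> omega
    have e1 : ∀ k' ≤ a, psum (fun i : Fin a =>
        ((σ (Fin.castLE (show a ≤ a+b+1 by omega) i)) : ℤ)) k' = psum (fun i => ((σ i) : ℤ)) k' :=
      fun k' hk' => psum_split1 _ σ hk'
    have e2 : ∀ k', psum (fun i : Fin b => ((σ ⟨a + 1 + (i : ℕ), by omega⟩) : ℤ)) k'
        = psum (fun i => ((σ i) : ℤ)) (a + 1 + k') - psum (fun i => ((σ i) : ℤ)) (a + 1) :=
      psum_split2 (show (a+1) + b = a+b+1 by omega) σ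
    constructor
    · constructor
      · intro k hk1 hk2
        rw [e1 k (by omega)]
        exact key1 k (by omega)
      · rw [e1 a le_rfl]
        exact key2.1
    · constructor
      · intro k hk1 hk2
        rw [e2 k]
        have h1 := hP.1 (a+1+k) (by omega) (by omega)
        omega
      · rw [e2 b, show a+1+b = a+b+1 from by omega]
        have h1 := hP.2
        omega
  · -- left inverse
    rintro ⟨τ1, τ2⟩ hp
    refine Prod.ext ?_ ?_
    · funext k
      simp only
      rw [concat_lt _ _ _ _ (show ((Fin.castLE (by omega) k : Fin (a+b+1)) : ℕ) < a from k.2)]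
      exact congrArg τ1 (Fin.ext rfl)
    · funext k
      simp only
      rw [concat_gt _ _ _ _ (show a < ((⟨a + 1 + (k:ℕ), by omega⟩ : Fin (a+b+1)) : ℕ) from by show a < a + 1 + (k:ℕ); omega)]
      exact congrArg τ2 (Fin.ext (by simp))
  · -- right inverse
    intro σ hσ
    simp only [Finset.mem_filter, Finset.mem_univ, true_and] at hσ
    obtain ⟨hP, hFH⟩ := hσ
    have key1 : ∀ k ≤ a, 0 ≤ psum (fun k => (σ k : ℤ)) k := by
      intro k hk
      rcases Nat.eq_zero_or_pos k with h0 | h0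
      · subst h0; rw [psum_zero]
      have h1 := hP.1 k (by omega) (by omega)
      have h2 := hFH.2 k hk
      omega
    have hs := psum_succ (fun k => (σ k : ℤ)) a (by omega)
    have hmem := mem_Hs.mp (σ ⟨a, by omega⟩).2
    have h0 := key1 a le_rfl
    have hh := hFH.1
    have key2 : ((σ ⟨a, by omega⟩ : HB) : ℤ) = -1 := by
      rcases hmem with h | h | h <;> omega
    funext i
    simp only
    rcases Nat.lt_trichotomy (i : ℕ) a with h | h | h
    · rw [concat_lt _ _ _ _ h]
      exact congrArg σ (Fin.ext rfl)
    · rw [concat_eq _ _ _ _ h]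
      refine (Subtype.ext ?_).symm
      rw [show i = (⟨a, by omega⟩ : Fin (a+b+1)) from Fin.ext h]
      exact key2
    · rw [concat_gt _ _ _ _ h]
      exact congrArg σ (Fin.ext (by simp; omega))
  · -- values
    rintro ⟨τ1, τ2⟩ hp
    simp only
    have hcomp : (fun k : Fin (a+b+1) =>
          AstarC s0 A z ((concat τ1 (⟨-1, neg_one_mem_Hs⟩ : HB) τ2) k : ℤ))
        = concat (fun k => AstarC s0 A z (τ1 k : ℤ)) (AstarC s0 A z (-1))
            (fun k => AstarC s0 A z (τ2 k : ℤ)) :=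
      comp_concat (fun t : HB => AstarC s0 A z (t : ℤ)) τ1 _ τ2
    rw [hcomp, ofFn_concat, List.prod_append, List.prod_cons, mul_assoc]

lemma PmatC_succ (n : ℕ) :
    PmatC s0 A z (n+1) = ∑ ab ∈ Finset.HasAntidiagonal.antidiagonal n,
      QmatC s0 A z ab.1 * AstarC s0 A z (-1) * QmatC s0 A z ab.2 := by
  classical
  have step1 : PmatC s0 A z (n+1) = ∑ ab ∈ Finset.HasAntidiagonal.antidiagonal n,
      ∑ σ : Fin (n+1) → HB,
        (if condP (n+1) (fun k => (σ k : ℤ)) ∧ firstHit (fun k => (σ k : ℤ)) ab.1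
         then (List.ofFn fun k : Fin (n+1) => AstarC s0 A z (σ k : ℤ)).prod else 0) := by
    unfold PmatC pathSumC
    rw [← Finset.sum_comm]
    refine Finset.sum_congr rfl fun σ _ => ?_
    by_cases hc : condP (n+1) (fun k => (σ k : ℤ))
    · rw [if_pos hc]
      obtain ⟨aa, ha, hfh⟩ := firstHit_exists hc
      rw [Finset.sum_eq_single (aa, n - aa)]
      · rw [if_pos ⟨hc, hfh⟩]
      · rintro ⟨a', b'⟩ hmem hne
        rw [if_neg]
        rintro ⟨-, hfh'⟩
        apply hne
        have hae : a' = aa := firstHit_unique hfh' hfh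
        have hmem' : a' + b' = n := by simpa using Finset.HasAntidiagonal.mem_antidiagonal.mp hmem
        subst hae
        have hb : b' = n - a' := by omega
        rw [hb]
      · intro hmem
        exact absurd (Finset.HasAntidiagonal.mem_antidiagonal.mpr (by simp; omega)) hmem
    · rw [if_neg hc]
      exact (Finset.sum_eq_zero fun ab _ => if_neg fun hcon => hc hcon.1).symm
  rw [step1]
  refine Finset.sum_congr rfl fun ab hab => ?_
  obtain ⟨a, b⟩ := ab
  have hn : a + b = n := by simpa using Finset.HasAntidiagonal.mem_antidiagonal.mp hab
  subst hn
  exact PmatC_piece a b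

end QBDSeries

namespace QBDSeries

variable {s0 : ℕ} {A : ℤ → ℤ → Matrix (Fin s0) (Fin s0) ℝ} {z : ℂ}

lemma AstarR_nonneg (hA : ∀ i j : ℤ, ∀ k l, 0 ≤ A i j k l) {r : ℝ} (hr : 0 < r) (i : ℤ)
    (k l : Fin s0) : 0 ≤ AstarR s0 A r i k l := by
  unfold AstarR
  rw [Matrix.sum_apply]
  refine Finset.sum_nonneg fun j _ => ?_
  simp only [Matrix.smul_apply, smul_eq_mul]
  exact mul_nonneg (le_of_lt (zpow_pos hr j)) (hA j i k l)

lemma AstarC_abs_le (hA : ∀ i j : ℤ, ∀ k l, 0 ≤ A i j k l) (i : ℤ) (k l : Fin s0) :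
    ‖AstarC s0 A z i k l‖ ≤ AstarR s0 A ‖z‖ i k l := by
  unfold AstarC AstarR
  rw [Matrix.sum_apply, Matrix.sum_apply]
  refine le_trans (norm_sum_le _ _) (le_of_eq (Finset.sum_congr rfl fun j _ => ?_))
  simp only [Matrix.smul_apply, smul_eq_mul, Matrix.map_apply, norm_mul, norm_zpow,
    Complex.norm_real, Real.norm_eq_abs]
  rw [abs_of_nonneg (hA j i k l)]

lemma prod_entry_nonneg (hA : ∀ i j : ℤ, ∀ k l, 0 ≤ A i j k l) {r : ℝ} (hr : 0 < r) :
    ∀ {n : ℕ} (σ : Fin n → HB) (k l : Fin s0),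
      0 ≤ (List.ofFn fun i => AstarR s0 A r (σ i : ℤ)).prod k l := by
  intro n
  induction n with
  | zero =>
    intro σ k l
    rw [List.ofFn_zero, List.prod_nil]
    by_cases h : k = l <;> simp [Matrix.one_apply, h]
  | succ n ih =>
    intro σ k l
    rw [List.ofFn_succ, List.prod_cons, Matrix.mul_apply]
    exact Finset.sum_nonneg fun p _ =>
      mul_nonneg (AstarR_nonneg hA hr _ k p) (ih _ p l)

lemma prod_entry_abs_le (hA : ∀ i j : ℤ, ∀ k l, 0 ≤ A i j k l) (hr : 0 < ‖z‖) :
    ∀ {n : ℕ} (σ : Fin n → HB) (k l : Fin s0),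
      ‖(List.ofFn fun i => AstarC s0 A z (σ i : ℤ)).prod k l‖
        ≤ (List.ofFn fun i => AstarR s0 A ‖z‖ (σ i : ℤ)).prod k l := by
  intro n
  induction n with
  | zero =>
    intro σ k l
    rw [List.ofFn_zero, List.ofFn_zero, List.prod_nil, List.prod_nil]
    by_cases h : k = l <;> simp [Matrix.one_apply, h]
  | succ n ih =>
    intro σ k l
    rw [List.ofFn_succ, List.ofFn_succ, List.prod_cons, List.prod_cons,
      Matrix.mul_apply, Matrix.mul_apply]
    refine le_trans (norm_sum_le _ _) (Finset.sum_le_sum fun p _ => ?_)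
    rw [norm_mul]
    exact mul_le_mul (AstarC_abs_le hA _ k p) (ih _ p l)
      (norm_nonneg _) (AstarR_nonneg hA hr _ k p)

lemma pathSumC_abs_le (hA : ∀ i j : ℤ, ∀ k l, 0 ≤ A i j k l) (hr : 0 < ‖z‖)
    (n : ℕ) (cond : (Fin n → ℤ) → Prop) (i j : Fin s0) :
    ‖pathSumC s0 A z n cond i j‖ ≤ pathSumR s0 A ‖z‖ n cond i j := by
  classical
  unfold pathSumC pathSumR
  rw [Matrix.sum_apply, Matrix.sum_apply]
  refine le_trans (norm_sum_le _ _) (Finset.sum_le_sum fun σ _ => ?_)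
  by_cases h : cond fun k => (σ k : ℤ)
  · rw [if_pos h, if_pos h]
    exact prod_entry_abs_le hA hr σ i j
  · rw [if_neg h, if_neg h]
    simp

lemma Qmat_abs_le (hA : ∀ i j : ℤ, ∀ k l, 0 ≤ A i j k l) (hr : 0 < ‖z‖)
    (n : ℕ) (i j : Fin s0) :
    ‖QmatC s0 A z n i j‖ ≤ QmatR s0 A ‖z‖ n i j := by
  unfold QmatC QmatR
  exact pathSumC_abs_le hA hr n _ i j

end QBDSeries

open QBDSeries in
/-- `(I − H1(z)) N1(z) = I` with `H1(z) = A_{*,0}(z) + A_{*,1}(z) N1(z) A_{*,-1}(z)`. -/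
theorem statement9
    (s0 : ℕ) (hs0 : 1 ≤ s0)
    (A : ℤ → ℤ → Matrix (Fin s0) (Fin s0) ℝ)
    (hAsupp : ∀ i j : ℤ, ¬(i ∈ Hs ∧ j ∈ Hs) → A i j = 0)
    (hAnn : ∀ i j : ℤ, ∀ k l, 0 ≤ A i j k l)
    (hAst : IsStochastic (∑ i ∈ Hs, ∑ j ∈ Hs, A i j))
    (z : ℂ) (hz : z ≠ 0)
    (hN : ∀ i j, Summable fun n : ℕ => QmatR s0 A ‖z‖ n i j)
    (hG : ∀ i j, Summable fun n : ℕ => DmatR s0 A ‖z‖ n i j)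
    (hR : ∀ i j, Summable fun n : ℕ => UmatR s0 A ‖z‖ n i j) :
    (1 - H1C s0 A z) * N1C s0 A z = 1 := by
  classical
  have hrpos : 0 < ‖z‖ := norm_pos_iff.mpr hz
  -- summability of the complex entries of `Q^{(n)}(z)`
  have habs : ∀ (n : ℕ) (i j : Fin s0),
      ‖QmatC s0 A z n i j‖ ≤ QmatR s0 A ‖z‖ n i j := by
    intro n i j
    exact Qmat_abs_le hAnn hrpos n i j
  have hQsum : ∀ i j, Summable fun n => QmatC s0 A z n i j :=
    fun i j => Summable.of_norm_bounded (hN i j) (fun n => habs n i j)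
  have hQnorm : ∀ i j, Summable fun n => ‖QmatC s0 A z n i j‖ :=
    fun i j => Summable.of_nonneg_of_le (fun n => norm_nonneg _) (fun n => habs n i j) (hN i j)
  have hNapp : ∀ i j, N1C s0 A z i j = ∑' n, QmatC s0 A z n i j := fun i j => rfl
  -- Cauchy products
  have hg : ∀ (k p q j : Fin s0), Summable (fun n => ∑ kl ∈ Finset.HasAntidiagonal.antidiagonal n,
      QmatC s0 A z kl.1 k p * QmatC s0 A z kl.2 q j) := fun k p q j =>
    (summable_norm_sum_mul_antidiagonal_of_summable_norm (hQnorm k p) (hQnorm q j)).of_norm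
  have hgsum : ∀ (k p q j : Fin s0), (∑' n, ∑ kl ∈ Finset.HasAntidiagonal.antidiagonal n,
        QmatC s0 A z kl.1 k p * QmatC s0 A z kl.2 q j)
      = N1C s0 A z k p * N1C s0 A z q j := by
    intro k p q j
    rw [hNapp k p, hNapp q j]
    exact (tsum_mul_tsum_eq_tsum_sum_antidiagonal_of_summable_norm
      (hQnorm k p) (hQnorm q j)).symm
  -- finite reorganization of the antidiagonal matrix sums
  have hfin : ∀ (n : ℕ) (k j : Fin s0),
      (∑ ab ∈ Finset.HasAntidiagonal.antidiagonal n,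
        QmatC s0 A z ab.1 * AstarC s0 A z (-1) * QmatC s0 A z ab.2) k j
      = ∑ q, ∑ p, AstarC s0 A z (-1) p q *
          ∑ ab ∈ Finset.HasAntidiagonal.antidiagonal n, QmatC s0 A z ab.1 k p * QmatC s0 A z ab.2 q j := by
    intro n k j
    rw [Matrix.sum_apply]
    have e1 : ∀ ab : ℕ × ℕ,
        (QmatC s0 A z ab.1 * AstarC s0 A z (-1) * QmatC s0 A z ab.2) k j
        = ∑ q, ∑ p, AstarC s0 A z (-1) p q *
            (QmatC s0 A z ab.1 k p * QmatC s0 A z ab.2 q j) := by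
      intro ab
      rw [Matrix.mul_apply]
      refine Finset.sum_congr rfl fun q _ => ?_
      rw [Matrix.mul_apply, Finset.sum_mul]
      refine Finset.sum_congr rfl fun p _ => ?_
      ring
    rw [Finset.sum_congr rfl fun ab _ => e1 ab]
    rw [Finset.sum_comm]
    refine Finset.sum_congr rfl fun q _ => ?_
    rw [Finset.sum_comm]
    refine Finset.sum_congr rfl fun p _ => ?_
    rw [Finset.mul_sum]
  -- the entries of `P^{(n+1)}`
  have ePn : ∀ (n : ℕ) (k j : Fin s0), PmatC s0 A z (n+1) k j
      = ∑ q, ∑ p, AstarC s0 A z (-1) p q *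
          ∑ ab ∈ Finset.HasAntidiagonal.antidiagonal n, QmatC s0 A z ab.1 k p * QmatC s0 A z ab.2 q j := by
    intro n k j
    rw [PmatC_succ]
    exact hfin n k j
  have hPsum1 : ∀ k j, Summable (fun n => PmatC s0 A z (n+1) k j) := by
    intro k j
    have e : (fun n => PmatC s0 A z (n+1) k j)
        = fun n => ∑ q, ∑ p, AstarC s0 A z (-1) p q *
            ∑ ab ∈ Finset.HasAntidiagonal.antidiagonal n, QmatC s0 A z ab.1 k p * QmatC s0 A z ab.2 q j := by
      funext n; exact ePn n k j
    rw [e]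
    exact summable_sum fun q _ => summable_sum fun p _ => ((hg k p q j).mul_left _)
  have hPsum : ∀ k j, Summable (fun n => PmatC s0 A z n k j) :=
    fun k j => (summable_nat_add_iff 1).mp (hPsum1 k j)
  have hPtsum : ∀ k j, (∑' n, PmatC s0 A z n k j)
      = (N1C s0 A z * AstarC s0 A z (-1) * N1C s0 A z) k j := by
    intro k j
    rw [Summable.tsum_eq_zero_add (hPsum k j), PmatC_zero]
    simp only [Matrix.zero_apply, zero_add]
    calc (∑' n, PmatC s0 A z (n+1) k j)
        = ∑' n, ∑ q, ∑ p, AstarC s0 A z (-1) p q *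
            ∑ ab ∈ Finset.HasAntidiagonal.antidiagonal n, QmatC s0 A z ab.1 k p * QmatC s0 A z ab.2 q j :=
          tsum_congr fun n => ePn n k j
      _ = ∑ q, ∑ p, AstarC s0 A z (-1) p q * (N1C s0 A z k p * N1C s0 A z q j) := by
          rw [Summable.tsum_finsetSum fun q _ => summable_sum fun p _ => ((hg k p q j).mul_left _)]
          refine Finset.sum_congr rfl fun q _ => ?_
          rw [Summable.tsum_finsetSum fun p _ => ((hg k p q j).mul_left _)]
          refine Finset.sum_congr rfl fun p _ => ?_
          rw [tsum_mul_left, hgsum k p q j]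
      _ = (N1C s0 A z * AstarC s0 A z (-1) * N1C s0 A z) k j := by
          rw [Matrix.mul_apply]
          refine Finset.sum_congr rfl fun q _ => ?_
          rw [Matrix.mul_apply, Finset.sum_mul]
          refine Finset.sum_congr rfl fun p _ => ?_
          ring
  -- the main recursion, entrywise
  have key : N1C s0 A z
      = 1 + (AstarC s0 A z 0 * N1C s0 A z
          + AstarC s0 A z 1 * (N1C s0 A z * AstarC s0 A z (-1) * N1C s0 A z)) := by
    ext i j
    rw [Matrix.add_apply, Matrix.add_apply]
    have h1 : N1C s0 A z i j = ∑' n, QmatC s0 A z n i j := rfl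
    rw [h1, Summable.tsum_eq_zero_add (hQsum i j), QmatC_zero]
    congr 1
    have e : ∀ n : ℕ, QmatC s0 A z (n+1) i j
        = (∑ k, AstarC s0 A z 0 i k * QmatC s0 A z n k j)
          + (∑ k, AstarC s0 A z 1 i k * PmatC s0 A z n k j) := by
      intro n
      rw [QmatC_succ, Matrix.add_apply, Matrix.mul_apply, Matrix.mul_apply]
    rw [tsum_congr e, Summable.tsum_add
      (summable_sum fun k _ => ((hQsum k j).mul_left _))
      (summable_sum fun k _ => ((hPsum k j).mul_left _))]
    congr 1
    · rw [Summable.tsum_finsetSum fun k _ => ((hQsum k j).mul_left _), Matrix.mul_apply]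
      refine Finset.sum_congr rfl fun k _ => ?_
      rw [tsum_mul_left, hNapp k j]
    · rw [Summable.tsum_finsetSum fun k _ => ((hPsum k j).mul_left _), Matrix.mul_apply]
      refine Finset.sum_congr rfl fun k _ => ?_
      rw [tsum_mul_left, hPtsum k j]
  -- conclude
  have hfinal : (1 - H1C s0 A z) * N1C s0 A z
      = N1C s0 A z - (AstarC s0 A z 0 * N1C s0 A z
          + AstarC s0 A z 1 * (N1C s0 A z * AstarC s0 A z (-1) * N1C s0 A z)) := by
    unfold H1C
    noncomm_ring
  rw [hfinal]
  nth_rewrite 1 [key]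
  exact add_sub_cancel_right _ _
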